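/- For even nonnegative integers k and any nonnegative integer n, ∑_{s=0}^{n} (-1)^{n-s} · C(n - 1/2 + (s+1/2)(k+1), 2n) · C(2n+1, n-s) · (2s+1)/(2n+1) = (k+1)^{2n}, where C denotes the generalized binomial coefficient. -/

import Mathlib

/-- Generalized binomial coefficient `C(x, m) = x(x-1)⋯(x-m+1)/m!` for rational `x`. -/
noncomputable def qchoose (x : ℚ) (m : ℕ) : ℚ :=
  (∏ i ∈ Finset.range m, (x - i)) / (Nat.factorial m)


open Polynomial Finset

lemma taylor_coeff_aux (N : ℕ) (p : ℚ[X]) (h : p.natDegree ≤ N + 1) :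
    (Polynomial.taylor 1 p).coeff N = p.coeff N + (N + 1) * p.coeff (N + 1) := by
  rw [Polynomial.taylor_coeff]
  have hd : (Polynomial.hasseDeriv N p).natDegree < 2 := by
    have := Polynomial.natDegree_hasseDeriv_le p N
    omega
  rw [Polynomial.eval_eq_sum_range' hd]
  simp [Finset.sum_range_succ, Polynomial.hasseDeriv_coeff]
  rw [Nat.add_comm 1 N, Nat.choose_succ_self_right]
  push_cast
  ring

lemma taylor_coeff_top (N : ℕ) (p : ℚ[X]) (h : p.natDegree ≤ N + 1) :
    (Polynomial.taylor 1 p).coeff (N + 1) = p.coeff (N + 1) := by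
  rw [Polynomial.taylor_coeff]
  have hd : (Polynomial.hasseDeriv (N + 1) p).natDegree < 1 := by
    have := Polynomial.natDegree_hasseDeriv_le p (N + 1)
    omega
  rw [Polynomial.eval_eq_sum_range' hd]
  simp [Polynomial.hasseDeriv_coeff]

lemma fwdDiff_iter_poly (N : ℕ) (p : ℚ[X]) (h : p.natDegree ≤ N) :
    (fwdDiff (1:ℚ))^[N] (fun x : ℚ => p.eval x) = fun _ => (Nat.factorial N : ℚ) * p.coeff N := by
  induction N generalizing p with
  | zero =>
    funext x
    have h0 := Polynomial.eq_C_of_natDegree_le_zero h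
    conv_lhs => rw [h0]
    simp
  | succ N ih =>
    set q : ℚ[X] := Polynomial.taylor 1 p - p with hq
    have hq1 : q.coeff N = (N + 1) * p.coeff (N + 1) := by
      simp [hq, taylor_coeff_aux N p h]
    have hqd : q.natDegree ≤ N := by
      rw [Polynomial.natDegree_le_iff_coeff_eq_zero]
      intro M hM
      rcases Nat.lt_or_ge M (N + 2) with hM2 | hM2
      · have : M = N + 1 := by omega
        subst this
        simp [hq, taylor_coeff_top N p h]
      · have h1 : p.coeff M = 0 := Polynomial.coeff_eq_zero_of_natDegree_lt (by omega)
        have h2 : (Polynomial.taylor 1 p).coeff M = 0 := by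
          apply Polynomial.coeff_eq_zero_of_natDegree_lt
          rw [Polynomial.natDegree_taylor]; omega
      
        simp [hq, h1, h2]
    have step : fwdDiff (1:ℚ) (fun x : ℚ => p.eval x) = fun x : ℚ => q.eval x := by
      funext x
      simp only [fwdDiff, hq, Polynomial.eval_sub, Polynomial.taylor_eval]
    rw [Function.iterate_succ_apply, step, ih q hqd, hq1]
    funext x
    push_cast [Nat.factorial_succ]
    ring

lemma alt_sum_poly (N : ℕ) (p : ℚ[X]) (h : p.natDegree ≤ N) :
    ∑ j ∈ Finset.range (N + 1), (-1 : ℚ) ^ (N - j) * (Nat.choose N j : ℚ) * p.eval (j : ℚ) =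
      (Nat.factorial N : ℚ) * p.coeff N := by
  have := fwdDiff_iter_eq_sum_shift (1 : ℚ) (fun x : ℚ => p.eval x) N 0
  rw [fwdDiff_iter_poly N p h] at this
  simp only at this
  rw [this]
  apply Finset.sum_congr rfl
  intro j hj
  rw [zsmul_eq_mul]
  push_cast
  simp

lemma prod_pair (a : ℚ) (n : ℕ) :
    ∏ i ∈ Finset.range (2 * n), (a + 2 * (n : ℚ) - 1 - 2 * (i : ℚ)) =
      ∏ l ∈ Finset.range n, (a ^ 2 - (2 * (l : ℚ) + 1) ^ 2) := by
  induction n with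
  | zero => simp
  | succ n ih =>
    have h2 : 2 * (n + 1) = (2 * n + 1) + 1 := by ring
    rw [h2, Finset.prod_range_succ, Finset.prod_range_succ', Finset.prod_range_succ]
    have e1 : ∀ i : ℕ, a + 2 * ((n : ℚ) + 1) - 1 - 2 * ((i : ℚ) + 1)
        = a + 2 * (n : ℚ) - 1 - 2 * (i : ℚ) := by intro i; ring
    push_cast
    simp only [e1]
    rw [ih]
    push_cast
    ring

lemma qchoose_eval (m : ℚ) (n s : ℕ) :
    qchoose ((n : ℚ) - 1/2 + ((s : ℚ) + 1/2) * m) (2 * n) =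
      (∏ l ∈ Finset.range n, (((2 * (s : ℚ) + 1) * m) ^ 2 - (2 * (l : ℚ) + 1) ^ 2)) /
        (4 ^ n * (Nat.factorial (2 * n) : ℚ)) := by
  rw [qchoose]
  have e1 : ∀ i : ℕ, ((n : ℚ) - 1/2 + ((s : ℚ) + 1/2) * m - (i : ℚ))
      = ((2 * (s : ℚ) + 1) * m + 2 * (n : ℚ) - 1 - 2 * (i : ℚ)) / 2 := by
    intro i; ring
  rw [Finset.prod_congr rfl fun i _ => e1 i, Finset.prod_div_distrib, Finset.prod_const,
    prod_pair ((2 * (s : ℚ) + 1) * m) n]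
  rw [Finset.card_range]
  rw [div_div]
  congr 1
  rw [show (4 : ℚ) ^ n = 2 ^ (2 * n) by rw [pow_mul]; norm_num]

lemma alt_sum_G (m : ℚ) (hm : m ≠ 0) (n : ℕ) (c : ℚ) :
    ∑ j ∈ Finset.range (2 * n + 1 + 1), (-1 : ℚ) ^ (2 * n + 1 - j) *
        (Nat.choose (2 * n + 1) j : ℚ) *
        ((c - 2 * (j : ℚ)) * ∏ l ∈ Finset.range n,
          ((c - 2 * (j : ℚ)) ^ 2 * m ^ 2 - (2 * (l : ℚ) + 1) ^ 2)) =
      (Nat.factorial (2 * n + 1) : ℚ) * ((m ^ 2) ^ n * (-2) ^ (2 * n + 1)) := by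
  classical
  set fac : ℕ → ℚ[X] := fun l =>
    Polynomial.C (m ^ 2) * Polynomial.X ^ 2 + Polynomial.C (0 : ℚ) * Polynomial.X +
      Polynomial.C (-(2 * (l : ℚ) + 1) ^ 2) with hfac
  have hm2 : m ^ 2 ≠ 0 := pow_ne_zero 2 hm
  have hfacdeg : ∀ l : ℕ, (fac l).natDegree = 2 := fun l =>
    Polynomial.natDegree_quadratic hm2
  have hfaclc : ∀ l : ℕ, (fac l).leadingCoeff = m ^ 2 := fun l =>
    Polynomial.leadingCoeff_quadratic hm2
  have hfacne : ∀ l : ℕ, fac l ≠ 0 := by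
    intro l h
    have := hfacdeg l
    rw [h] at this
    simp at this
  set q : ℚ[X] := Polynomial.X * ∏ l ∈ Finset.range n, fac l with hq
  have hprodne : (∏ l ∈ Finset.range n, fac l) ≠ 0 :=
    Finset.prod_ne_zero_iff.mpr fun l _ => hfacne l
  have hqne : q ≠ 0 := mul_ne_zero Polynomial.X_ne_zero hprodne
  have hqdeg : q.natDegree = 2 * n + 1 := by
    rw [hq, Polynomial.natDegree_mul Polynomial.X_ne_zero hprodne,
      Polynomial.natDegree_prod _ _ fun l _ => hfacne l]
    simp [hfacdeg, Finset.sum_const, mul_comm]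
    omega
  have hqlc : q.leadingCoeff = (m ^ 2) ^ n := by
    rw [hq, Polynomial.leadingCoeff_mul, Polynomial.leadingCoeff_X, one_mul,
      Polynomial.leadingCoeff_prod]
    simp [hfaclc]
  set u : ℚ[X] := Polynomial.C (-2 : ℚ) * Polynomial.X + Polynomial.C c with hu
  have hudeg : u.natDegree = 1 := Polynomial.natDegree_linear (by norm_num)
  have hulc : u.leadingCoeff = -2 := Polynomial.leadingCoeff_linear (by norm_num)
  set p : ℚ[X] := q.comp u with hp
  have hpdeg : p.natDegree = 2 * n + 1 := by
    rw [hp, Polynomial.natDegree_comp, hqdeg, hudeg, mul_one]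
  have hpc : p.coeff (2 * n + 1) = (m ^ 2) ^ n * (-2) ^ (2 * n + 1) := by
    have := Polynomial.leadingCoeff_comp (p := q) (q := u) (by rw [hudeg]; norm_num)
    rw [← hp, hqlc, hulc, hqdeg] at this
    rw [Polynomial.leadingCoeff, hpdeg] at this
    exact this
  have heval : ∀ j : ℚ, p.eval j = (c - 2 * j) * ∏ l ∈ Finset.range n,
      ((c - 2 * j) ^ 2 * m ^ 2 - (2 * (l : ℚ) + 1) ^ 2) := by
    intro j
    rw [hp, Polynomial.eval_comp, hq]
    simp only [Polynomial.eval_mul, Polynomial.eval_prod, Polynomial.eval_X, hu, hfac,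
      Polynomial.eval_add, Polynomial.eval_C, Polynomial.eval_pow]
    rw [show (-2 * j + c) = c - 2 * j by ring]
    congr 1
    apply Finset.prod_congr rfl
    intro l _
    ring
  have := alt_sum_poly (2 * n + 1) p (le_of_eq hpdeg)
  rw [hpc] at this
  rw [← this]
  apply Finset.sum_congr rfl
  intro j _
  rw [heval (j : ℚ)]

lemma neg_one_pow_sub (N i : ℕ) (h : i ≤ N) : (-1:ℚ)^(N-i) = (-1)^N * (-1)^i := by
  have h1 : (-1:ℚ)^(N-i) * (-1)^i = (-1)^N := by rw [← pow_add]; congr 1; omega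
  have h2 : (-1:ℚ)^i * (-1)^i = 1 := by
    rw [← pow_add, ← two_mul, pow_mul]; norm_num
  calc (-1:ℚ)^(N-i) = (-1)^(N-i) * ((-1)^i * (-1)^i) := by rw [h2, mul_one]
  _ = ((-1)^(N-i) * (-1)^i) * (-1)^i := by ring
  _ = (-1)^N * (-1)^i := by rw [h1]

lemma key_sum (m : ℚ) (hm : m ≠ 0) (n : ℕ) :
    ∑ s ∈ Finset.range (n + 1), (-1 : ℚ) ^ (n - s) * (Nat.choose (2 * n + 1) (n - s) : ℚ) *
        (2 * (s : ℚ) + 1) * ∏ l ∈ Finset.range n,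
          ((2 * (s : ℚ) + 1) ^ 2 * m ^ 2 - (2 * (l : ℚ) + 1) ^ 2) =
      4 ^ n * (Nat.factorial (2 * n + 1) : ℚ) * m ^ (2 * n) := by
  set c : ℚ := 2 * (n : ℚ) + 1 with hc
  set G : ℕ → ℚ := fun j => (c - 2 * (j : ℚ)) * ∏ l ∈ Finset.range n,
    ((c - 2 * (j : ℚ)) ^ 2 * m ^ 2 - (2 * (l : ℚ) + 1) ^ 2) with hG
  set F : ℕ → ℚ := fun j => (-1 : ℚ) ^ j * (Nat.choose (2 * n + 1) j : ℚ) * G j with hF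
  -- step 1: LHS = ∑_{j<n+1} F j
  have hhalf : ∑ s ∈ Finset.range (n + 1), (-1 : ℚ) ^ (n - s) *
      (Nat.choose (2 * n + 1) (n - s) : ℚ) * (2 * (s : ℚ) + 1) * ∏ l ∈ Finset.range n,
        ((2 * (s : ℚ) + 1) ^ 2 * m ^ 2 - (2 * (l : ℚ) + 1) ^ 2) =
      ∑ j ∈ Finset.range (n + 1), F j := by
    rw [← Finset.sum_range_reflect F (n + 1)]
    apply Finset.sum_congr rfl
    intro s hs
    have hs' : s ≤ n := by have := Finset.mem_range.mp hs; omega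
    have hred : n + 1 - 1 - s = n - s := rfl
    rw [hred]
    simp only [hF, hG, Nat.cast_sub hs']
    rw [show c - 2 * ((n : ℚ) - (s : ℚ)) = 2 * (s : ℚ) + 1 from by rw [hc]; ring]
    ring
  rw [hhalf]
  -- symmetry of F
  have hsym : ∀ j : ℕ, j ≤ n → F (2 * n + 1 - j) = F j := by
    intro j hj
    have hj1 : j ≤ 2 * n + 1 := by omega
    simp only [hF, hG]
    rw [Nat.choose_symm hj1, neg_one_pow_sub (2 * n + 1) j hj1,
      Nat.cast_sub hj1, Odd.neg_one_pow ⟨n, by ring⟩]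
    push_cast
    rw [show c - 2 * ((2 * (n : ℚ) + 1) - (j : ℚ)) = -(c - 2 * (j : ℚ)) from by rw [hc]; ring]
    simp only [neg_sq]
    ring
  -- doubling
  have hdouble : ∑ j ∈ Finset.range (2 * n + 1 + 1), F j = 2 * ∑ j ∈ Finset.range (n + 1), F j := by
    rw [show 2 * n + 1 + 1 = (n + 1) + (n + 1) from by ring, Finset.sum_range_add]
    have : ∑ j ∈ Finset.range (n + 1), F (n + 1 + j) = ∑ j ∈ Finset.range (n + 1), F j := by
      rw [← Finset.sum_range_reflect (fun j => F (n + 1 + j)) (n + 1)]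
      apply Finset.sum_congr rfl
      intro j hj
      have hj' : j ≤ n := by have := Finset.mem_range.mp hj; omega
      rw [show n + 1 + (n + 1 - 1 - j) = 2 * n + 1 - j from by omega]
      exact hsym j hj'
    rw [this]
    ring
  -- full sum value
  have hfull : ∑ j ∈ Finset.range (2 * n + 1 + 1), F j =
      (Nat.factorial (2 * n + 1) : ℚ) * ((m ^ 2) ^ n * 2 ^ (2 * n + 1)) := by
    have halt := alt_sum_G m hm n c
    have : ∑ j ∈ Finset.range (2 * n + 1 + 1), F j =
        -∑ j ∈ Finset.range (2 * n + 1 + 1), (-1 : ℚ) ^ (2 * n + 1 - j) *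
          (Nat.choose (2 * n + 1) j : ℚ) *
          ((c - 2 * (j : ℚ)) * ∏ l ∈ Finset.range n,
            ((c - 2 * (j : ℚ)) ^ 2 * m ^ 2 - (2 * (l : ℚ) + 1) ^ 2)) := by
      rw [← Finset.sum_neg_distrib]
      apply Finset.sum_congr rfl
      intro j hj
      have hj1 : j ≤ 2 * n + 1 := by have := Finset.mem_range.mp hj; omega
      rw [neg_one_pow_sub (2 * n + 1) j hj1, Odd.neg_one_pow ⟨n, by ring⟩]
      simp only [hF, hG]
      ring
    rw [this, halt, show ((-2 : ℚ)) ^ (2 * n + 1) = -(2 ^ (2 * n + 1)) from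
      Odd.neg_pow ⟨n, by ring⟩ 2]
    ring
  have h2 : (2 : ℚ) ^ (2 * n + 1) = 2 * 4 ^ n := by
    rw [pow_succ, pow_mul]; norm_num; ring
  have hm2n : (m ^ 2) ^ n = m ^ (2 * n) := by rw [← pow_mul]
  rw [hdouble] at hfull
  rw [h2, hm2n] at hfull
  linarith [hfull]

/-- For even `k` and any `n`,
`∑_{s=0}^{n} (-1)^{n-s} C(n-1/2+(s+1/2)(k+1), 2n) C(2n+1, n-s) (2s+1)/(2n+1) = (k+1)^{2n}`. -/
theorem steinberg_even_identity (k n : ℕ) (hk : Even k) :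
    ∑ s ∈ Finset.range (n + 1), (-1 : ℚ) ^ (n - s) *
        qchoose ((n : ℚ) - 1/2 + ((s : ℚ) + 1/2) * ((k : ℚ) + 1)) (2 * n) *
        (Nat.choose (2 * n + 1) (n - s) : ℚ) * ((2 * (s : ℚ) + 1) / (2 * (n : ℚ) + 1)) =
      ((k : ℚ) + 1) ^ (2 * n) := by
  set m : ℚ := (k : ℚ) + 1 with hmdef
  have hm : m ≠ 0 := by positivity
  have hsummand : ∀ s : ℕ, (-1 : ℚ) ^ (n - s) *
      qchoose ((n : ℚ) - 1/2 + ((s : ℚ) + 1/2) * m) (2 * n) *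
      (Nat.choose (2 * n + 1) (n - s) : ℚ) * ((2 * (s : ℚ) + 1) / (2 * (n : ℚ) + 1)) =
      ((-1 : ℚ) ^ (n - s) * (Nat.choose (2 * n + 1) (n - s) : ℚ) * (2 * (s : ℚ) + 1) *
        ∏ l ∈ Finset.range n, ((2 * (s : ℚ) + 1) ^ 2 * m ^ 2 - (2 * (l : ℚ) + 1) ^ 2)) /
        ((2 * (n : ℚ) + 1) * (4 ^ n * (Nat.factorial (2 * n) : ℚ))) := by
    intro s
    rw [qchoose_eval m n s]
    have hp : ∏ l ∈ Finset.range n, (((2 * (s : ℚ) + 1) * m) ^ 2 - (2 * (l : ℚ) + 1) ^ 2)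
        = ∏ l ∈ Finset.range n, ((2 * (s : ℚ) + 1) ^ 2 * m ^ 2 - (2 * (l : ℚ) + 1) ^ 2) :=
      Finset.prod_congr rfl (fun l _ => by ring)
    rw [hp]
    have h1 : (4 : ℚ) ^ n ≠ 0 := by positivity
    have h2 : (Nat.factorial (2 * n) : ℚ) ≠ 0 :=
      Nat.cast_ne_zero.mpr (Nat.factorial_ne_zero (2 * n))
    have h3 : (2 * (n : ℚ) + 1) ≠ 0 := by positivity
    field_simp
  simp only [hsummand]
  rw [← Finset.sum_div, key_sum m hm n]
  have hfact : (Nat.factorial (2 * n + 1) : ℚ) = (2 * (n : ℚ) + 1) * (Nat.factorial (2 * n) : ℚ) := by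
    rw [Nat.factorial_succ]
    push_cast
    ring
  rw [hfact]
  have h1 : (4 : ℚ) ^ n ≠ 0 := by positivity
  have h2 : (Nat.factorial (2 * n) : ℚ) ≠ 0 := by
    exact_mod_cast Nat.cast_ne_zero.mpr (Nat.factorial_ne_zero (2 * n))
  have h3 : (2 * (n : ℚ) + 1) ≠ 0 := by positivity
  field_simp
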